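/- Let a_k = exp(−8^{l+1}) for 8^l ≤ k < 8^{l+1} (l ≥ 0) and a_0 = 1, and let T be the tower map on Z = ⊔_k (0,a_k] × {k} with the linear return maps g_k(x) = (x − a_{k+1})/(a_k − a_{k+1}) on (a_{k+1}, a_k]. Define ψ(x,k) = 1 if 8^l ≤ k < 2·8^l for some l ≥ 0, and ψ(x,k) = 0 otherwise. Then for every integer l ≥ 1, the set {x ∈ (0,1] : (1/8^l) S_{8^l} ψ(x,0) > 7/16} is empty; consequently liminf_{n→∞} (1/n) log m({x : (1/n) S_n ψ(x,0) > 7/16}) = −∞. -/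

import Mathlib

open scoped Classical
open MeasureTheory Real Filter

/-- Birkhoff sum along `T`. -/
noncomputable def birkhoffSum' {Z : Type*} (T : Z → Z) (ψ : Z → ℝ) (n : ℕ) (z : Z) : ℝ :=
  ∑ i ∈ Finset.range n, ψ (T^[i] z)

/-! ### Auxiliary combinatorics on "good" levels -/

/-- A level `k` is good if `8^l ≤ k < 2·8^l` for some `l`. -/
def IsGoodLvl (k : ℕ) : Prop := ∃ l : ℕ, 8 ^ l ≤ k ∧ k < 2 * 8 ^ l

/-- Number of good levels below `t`. -/
noncomputable def Gcnt (t : ℕ) : ℕ := ((Finset.range t).filter IsGoodLvl).card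

lemma isGoodLvl_iff {j k : ℕ} (h1 : 8 ^ j ≤ k) (h2 : k < 8 ^ (j + 1)) :
    IsGoodLvl k ↔ k < 2 * 8 ^ j := by
  constructor
  · rintro ⟨i, hi1, hi2⟩
    rcases lt_trichotomy i j with h | h | h
    · exfalso
      have hle : 8 ^ (i + 1) ≤ 8 ^ j := Nat.pow_le_pow_right (by norm_num) (by omega)
      have : (8 : ℕ) ^ (i + 1) = 8 * 8 ^ i := by ring
      omega
    · subst h; exact hi2
    · exfalso
      have hle : 8 ^ (j + 1) ≤ 8 ^ i := Nat.pow_le_pow_right (by norm_num) (by omega)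
      omega
  · exact fun h => ⟨j, h1, h⟩

lemma Gcnt_split {s t : ℕ} (h : s ≤ t) :
    Gcnt t = Gcnt s + ((Finset.Ico s t).filter IsGoodLvl).card := by
  rw [Gcnt, Gcnt, Finset.range_eq_Ico,
    ← Finset.Ico_union_Ico_eq_Ico (Nat.zero_le s) h, Finset.filter_union,
    Finset.card_union_of_disjoint]
  rw [Finset.range_eq_Ico]
  exact Finset.disjoint_filter_filter (p := IsGoodLvl) (q := IsGoodLvl) (Finset.Ico_disjoint_Ico_consecutive 0 s t)

lemma Gcnt_mono : Monotone Gcnt := by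
  intro s t h
  rw [Gcnt_split h]
  omega

lemma filter_Ico_good {j t : ℕ} (h2 : t ≤ 8 ^ (j + 1)) :
    (Finset.Ico (8 ^ j) t).filter IsGoodLvl = Finset.Ico (8 ^ j) (min t (2 * 8 ^ j)) := by
  ext k
  simp only [Finset.mem_filter, Finset.mem_Ico, lt_min_iff]
  constructor
  · rintro ⟨⟨hk1, hk2⟩, hg⟩
    exact ⟨hk1, hk2, (isGoodLvl_iff hk1 (by omega)).1 hg⟩
  · rintro ⟨hk1, hk2, hk3⟩
    exact ⟨⟨hk1, hk2⟩, (isGoodLvl_iff hk1 (by omega)).2 hk3⟩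

lemma Gcnt_in_block {j t : ℕ} (h1 : 8 ^ j ≤ t) (h2 : t ≤ 8 ^ (j + 1)) :
    Gcnt t = Gcnt (8 ^ j) + (min t (2 * 8 ^ j) - 8 ^ j) := by
  rw [Gcnt_split h1, filter_Ico_good h2, Nat.card_Ico]

lemma Gcnt_pow (j : ℕ) : 7 * Gcnt (8 ^ j) + 1 = 8 ^ j := by
  induction j with
  | zero =>
    have h0 : Gcnt 1 = 0 := by
      rw [Gcnt]
      refine Finset.card_eq_zero.2 (Finset.filter_eq_empty_iff.2 ?_)
      intro k hk
      simp only [Finset.mem_range] at hk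
      rintro ⟨l, hl1, _⟩
      have : 1 ≤ 8 ^ l := Nat.one_le_pow _ _ (by norm_num)
      omega
    simp [pow_zero, h0]
  | succ j ih =>
    have hpow : (8 : ℕ) ^ (j + 1) = 8 * 8 ^ j := by ring
    have h := Gcnt_in_block (j := j) (t := 8 ^ (j + 1))
      (Nat.pow_le_pow_right (by norm_num) (by omega)) le_rfl
    omega

lemma Gcnt_bound : ∀ j t : ℕ, t ≤ 8 ^ (j + 1) → 7 * Gcnt t ≤ t + 6 * 8 ^ j := by
  intro j
  induction j with
  | zero =>
    intro t ht
    rcases Nat.eq_zero_or_pos t with rfl | htpos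
    · simp [Gcnt]
    · have h1 : Gcnt t ≤ Gcnt 8 := Gcnt_mono (by simpa using ht)
      have h2 : 7 * Gcnt (8 ^ 1) + 1 = 8 ^ 1 := Gcnt_pow 1
      simp only [pow_one] at h2 ⊢
      omega
  | succ j ih =>
    intro t ht
    by_cases h : t ≤ 8 ^ (j + 1)
    · have := ih t h
      have : (8 : ℕ) ^ j ≤ 8 ^ (j + 1) := Nat.pow_le_pow_right (by norm_num) (by omega)
      have := ih t h
      omega
    · push_neg at h
      have hblock := Gcnt_in_block (j := j + 1) (t := t) (by omega) ht
      have hG := Gcnt_pow (j + 1)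
      have hpow : (8 : ℕ) ^ (j + 2) = 8 * 8 ^ (j + 1) := by ring
      omega

/-- The correction term: `Cb n = max_{t ≤ n} (7·G(t) − t)`. -/
noncomputable def Cb (n : ℕ) : ℕ := (Finset.range (n + 1)).sup (fun t => 7 * Gcnt t - t)

lemma Cb_mono {m n : ℕ} (h : m ≤ n) : Cb m ≤ Cb n :=
  Finset.sup_mono (Finset.range_subset_range.2 (by omega))

lemma le_Cb (n : ℕ) : 7 * Gcnt n ≤ n + Cb n := by
  have : 7 * Gcnt n - n ≤ Cb n :=
    Finset.le_sup (f := fun t => 7 * Gcnt t - t) (Finset.self_mem_range_succ n)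
  omega

lemma Cb_le {n B : ℕ} (h : ∀ t, t ≤ n → 7 * Gcnt t ≤ t + B) : Cb n ≤ B := by
  refine Finset.sup_le fun t ht => ?_
  have := h t (by simpa [Nat.lt_succ_iff] using Finset.mem_range.1 ht)
  omega

/-! ### Dynamics lemmas -/

section Tower

variable (a : ℕ → ℝ) (ha0 : a 0 = 1)
  (ha : ∀ k l : ℕ, 8 ^ l ≤ k → k < 8 ^ (l + 1) → a k = Real.exp (-(8 : ℝ) ^ (l + 1)))
  (T : ℝ × ℕ → ℝ × ℕ)
  (hT : ∀ x : ℝ, ∀ k : ℕ, T (x, k) =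
    if x ≤ a (k + 1) then (x, k + 1) else ((x - a (k + 1)) / (a k - a (k + 1)), 0))
  (ψ : ℝ × ℕ → ℝ)
  (hψ : ∀ x : ℝ, ∀ k : ℕ, ψ (x, k) =
    if ∃ l : ℕ, 8 ^ l ≤ k ∧ k < 2 * 8 ^ l then 1 else 0)

include ha in
lemma aval {k : ℕ} (hk : k ≠ 0) : a k = Real.exp (-(8 : ℝ) ^ (Nat.log 8 k + 1)) :=
  ha k _ (Nat.pow_log_le_self 8 hk) (Nat.lt_pow_succ_log_self (by norm_num) k)

include ha0 ha hT in
lemma climb {x : ℝ} (hx : x ∈ Set.Ioc (0 : ℝ) 1) {j : ℕ}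
    (hj : Real.exp (-(8 : ℝ) ^ (j + 1)) < x)
    (hmin : ∀ m, m < j → x ≤ Real.exp (-(8 : ℝ) ^ (m + 1))) :
    (∀ i, i < 8 ^ j → T^[i] (x, 0) = (x, i)) ∧
      ∃ y ∈ Set.Ioc (0 : ℝ) 1, T^[8 ^ j] (x, 0) = (y, 0) := by
  have h8pos : 1 ≤ 8 ^ j := Nat.one_le_pow _ _ (by norm_num)
  have hxle : ∀ k, 1 ≤ k → k < 8 ^ j → x ≤ a k := by
    intro k hk1 hk2
    rw [aval a ha (by omega)]
    have hlogk : 8 ^ Nat.log 8 k ≤ k := Nat.pow_log_le_self 8 (by omega)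
    have hm : Nat.log 8 k < j := by
      by_contra h
      push_neg at h
      have : 8 ^ j ≤ 8 ^ Nat.log 8 k := Nat.pow_le_pow_right (by norm_num) h
      omega
    exact hmin _ hm
  have hiter : ∀ i, i < 8 ^ j → T^[i] (x, 0) = (x, i) := by
    intro i
    induction i with
    | zero => intro _; simp
    | succ i ih =>
      intro h
      rw [Function.iterate_succ_apply', ih (by omega), hT,
        if_pos (hxle (i + 1) (by omega) h)]
  refine ⟨hiter, ?_⟩
  have ha8 : a (8 ^ j) = Real.exp (-(8 : ℝ) ^ (j + 1)) := by
    rw [aval a ha (by omega), Nat.log_pow (by norm_num)]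
  have htop : x ≤ a (8 ^ j - 1) := by
    rcases Nat.eq_zero_or_pos j with rfl | hj1
    · simpa [ha0] using hx.2
    · have hone : 1 ≤ (8 : ℕ) ^ (j - 1) := Nat.one_le_pow _ _ (by norm_num)
      have hplow : (8 : ℕ) ^ (j - 1) ≤ 8 ^ j - 1 := by
        have : (8 : ℕ) ^ (j - 1) < 8 ^ j := Nat.pow_lt_pow_right (by norm_num) (by omega)
        omega
      have hlog : Nat.log 8 (8 ^ j - 1) = j - 1 := by
        refine Nat.log_eq_of_pow_le_of_lt_pow hplow ?_
        rw [show j - 1 + 1 = j from by omega]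
        omega
      rw [aval a ha (by omega), hlog, show j - 1 + 1 = j from by omega]
      have := hmin (j - 1) (by omega)
      rwa [show j - 1 + 1 = j from by omega] at this
  have hxa : a (8 ^ j) < x := ha8 ▸ hj
  have hlast : T^[8 ^ j] (x, 0) = T (x, 8 ^ j - 1) := by
    conv_lhs => rw [show 8 ^ j = (8 ^ j - 1) + 1 from by omega]
    rw [Function.iterate_succ_apply']
    rcases Nat.eq_zero_or_pos (8 ^ j - 1) with h0 | hpos
    · rw [h0]; simp
    · rw [hiter _ (by omega)]
  rw [hlast, hT, show 8 ^ j - 1 + 1 = 8 ^ j from by omega, if_neg (not_le.2 hxa)]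
  have hlt : a (8 ^ j) < a (8 ^ j - 1) := lt_of_lt_of_le hxa htop
  refine ⟨_, ⟨div_pos (by linarith) (by linarith), ?_⟩, rfl⟩
  rw [div_le_one (by linarith)]
  linarith

include hψ in
lemma climb_sum {x : ℝ} {j : ℕ}
    (hiter : ∀ i, i < 8 ^ j → T^[i] (x, 0) = (x, i)) :
    ∀ n, n ≤ 8 ^ j → birkhoffSum' T ψ n (x, 0) = (Gcnt n : ℝ) := by
  intro n hn
  unfold birkhoffSum'
  have : ∀ i ∈ Finset.range n, ψ (T^[i] (x, 0)) = if IsGoodLvl i then (1 : ℝ) else 0 := by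
    intro i hi
    rw [hiter i (lt_of_lt_of_le (Finset.mem_range.1 hi) hn), hψ]
    rfl
  rw [Finset.sum_congr rfl this, Finset.sum_boole, Gcnt]

end Tower

lemma exists_exp_lt {x : ℝ} (hx : 0 < x) : ∃ j : ℕ, Real.exp (-(8 : ℝ) ^ (j + 1)) < x := by
  obtain ⟨N, hN⟩ := exists_nat_gt (-Real.log x)
  refine ⟨N, ?_⟩
  have h1 : (N : ℕ) < 8 ^ (N + 1) := by
    calc N < N + 1 := by omega
    _ ≤ 8 ^ (N + 1) := (Nat.lt_pow_self (by norm_num) : N + 1 < 8 ^ (N + 1)).le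
  have h1' : (N : ℝ) ≤ (8 : ℝ) ^ (N + 1) := by exact_mod_cast h1.le
  have : Real.exp (-(8 : ℝ) ^ (N + 1)) < Real.exp (Real.log x) :=
    Real.exp_lt_exp.2 (by linarith)
  rwa [Real.exp_log hx] at this

theorem stmt5 (a : ℕ → ℝ) (ha0 : a 0 = 1)
    (ha : ∀ k l : ℕ, 8 ^ l ≤ k → k < 8 ^ (l + 1) → a k = Real.exp (-(8 : ℝ) ^ (l + 1)))
    (T : ℝ × ℕ → ℝ × ℕ)
    (hT : ∀ x : ℝ, ∀ k : ℕ, T (x, k) =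
      if x ≤ a (k + 1) then (x, k + 1) else ((x - a (k + 1)) / (a k - a (k + 1)), 0))
    (ψ : ℝ × ℕ → ℝ)
    (hψ : ∀ x : ℝ, ∀ k : ℕ, ψ (x, k) =
      if ∃ l : ℕ, 8 ^ l ≤ k ∧ k < 2 * 8 ^ l then 1 else 0) :
    (∀ l : ℕ, 1 ≤ l →
      {x : ℝ | x ∈ Set.Ioc (0 : ℝ) 1 ∧
        birkhoffSum' T ψ (8 ^ l) (x, 0) / (8 ^ l : ℝ) > 7 / 16} = ∅) ∧
    liminf (fun n : ℕ =>
      ENNReal.log (volume {x : ℝ | x ∈ Set.Ioc (0 : ℝ) 1 ∧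
        birkhoffSum' T ψ n (x, 0) / (n : ℝ) > 7 / 16}) / (n : EReal)) atTop = ⊥ := by
  -- Main bound: for every `n` and `x ∈ (0,1]`, `7·S_n ψ(x,0) ≤ n + Cb n`.
  have main : ∀ n : ℕ, ∀ x : ℝ, x ∈ Set.Ioc (0 : ℝ) 1 →
      7 * birkhoffSum' T ψ n (x, 0) ≤ (n : ℝ) + (Cb n : ℝ) := by
    intro n
    induction n using Nat.strong_induction_on with
    | _ n IH =>
      intro x hx
      have hex := exists_exp_lt hx.1
      set j := Nat.find hex with hjdef
      have hj : Real.exp (-(8 : ℝ) ^ (j + 1)) < x := Nat.find_spec hex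
      have hmin : ∀ m, m < j → x ≤ Real.exp (-(8 : ℝ) ^ (m + 1)) := fun m hm =>
        not_lt.1 (Nat.find_min hex hm)
      obtain ⟨hiter, y, hy, hTy⟩ := climb a ha0 ha T hT hx hj hmin
      have h8pos : 1 ≤ 8 ^ j := Nat.one_le_pow _ _ (by norm_num)
      by_cases hn : n ≤ 8 ^ j
      · rw [climb_sum T ψ hψ hiter n hn]
        have := le_Cb n
        have hcast : ((7 * Gcnt n : ℕ) : ℝ) ≤ ((n + Cb n : ℕ) : ℝ) := by exact_mod_cast this
        push_cast at hcast
        linarith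
      · push_neg at hn
        have hsplit : birkhoffSum' T ψ n (x, 0) =
            birkhoffSum' T ψ (8 ^ j) (x, 0) +
              birkhoffSum' T ψ (n - 8 ^ j) (T^[8 ^ j] (x, 0)) := by
          conv_lhs => rw [show n = 8 ^ j + (n - 8 ^ j) from by omega]
          exact birkhoffSum_add T ψ (8 ^ j) (n - 8 ^ j) (x, 0)
        rw [hsplit, hTy, climb_sum T ψ hψ hiter (8 ^ j) le_rfl]
        have hG : 7 * Gcnt (8 ^ j) + 1 = 8 ^ j := Gcnt_pow j
        have hIH := IH (n - 8 ^ j) (by omega) y hy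
        have hCmono : (Cb (n - 8 ^ j) : ℝ) ≤ (Cb n : ℝ) := by
          exact_mod_cast Cb_mono (by omega : n - 8 ^ j ≤ n)
        have hGr : (7 : ℝ) * (Gcnt (8 ^ j) : ℝ) + 1 = ((8 ^ j : ℕ) : ℝ) := by
          exact_mod_cast hG
        have hcast : ((n - 8 ^ j : ℕ) : ℝ) = (n : ℝ) - ((8 ^ j : ℕ) : ℝ) := by
          have : (8 : ℕ) ^ j ≤ n := hn.le
          push_cast [this]
          ring
        rw [hcast] at hIH
        linarith
  have part1 : ∀ l : ℕ, 1 ≤ l →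
      {x : ℝ | x ∈ Set.Ioc (0 : ℝ) 1 ∧
        birkhoffSum' T ψ (8 ^ l) (x, 0) / (8 ^ l : ℝ) > 7 / 16} = ∅ := by
    intro l hl
    rw [Set.eq_empty_iff_forall_notMem]
    rintro x ⟨hx, hgt⟩
    have hb := main (8 ^ l) x hx
    have hC : Cb (8 ^ l) ≤ 6 * 8 ^ (l - 1) := by
      refine Cb_le fun t ht => Gcnt_bound (l - 1) t ?_
      rwa [show l - 1 + 1 = l from by omega]
    have hCr : ((Cb (8 ^ l) : ℕ) : ℝ) ≤ 6 * (8 : ℝ) ^ (l - 1) := by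
      exact_mod_cast hC
    have h8 : (8 : ℝ) ^ l = 8 * (8 : ℝ) ^ (l - 1) := by
      conv_lhs => rw [show l = (l - 1) + 1 from by omega]
      ring
    have h8n : ((8 ^ l : ℕ) : ℝ) = (8 : ℝ) ^ l := by push_cast; ring
    rw [h8n] at hb
    have hpos : (0 : ℝ) < (8 : ℝ) ^ l := by positivity
    have hpos' : (0 : ℝ) < (8 : ℝ) ^ (l - 1) := by positivity
    rw [gt_iff_lt, lt_div_iff₀ hpos] at hgt
    nlinarith
  refine ⟨part1, ?_⟩
  refine le_bot_iff.mp (Filter.liminf_le_of_frequently_le' ?_)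
  rw [Filter.frequently_atTop]
  intro N
  have hNle : N ≤ 8 ^ (N + 1) :=
    le_of_lt (lt_of_lt_of_le (Nat.lt_pow_self (by norm_num) : N < 8 ^ N)
      (Nat.pow_le_pow_right (by norm_num) (by omega)))
  refine ⟨8 ^ (N + 1), hNle, ?_⟩
  have h0 : volume {x : ℝ | x ∈ Set.Ioc (0 : ℝ) 1 ∧
      birkhoffSum' T ψ (8 ^ (N + 1)) (x, 0) / ((8 ^ (N + 1) : ℕ) : ℝ) > 7 / 16} = 0 := by
    rw [show ((8 ^ (N + 1) : ℕ) : ℝ) = (8 : ℝ) ^ (N + 1) from by push_cast; ring,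
      part1 (N + 1) (by omega), measure_empty]
  rw [h0]
  simp only [ENNReal.log_zero]
  have hpos : (0 : EReal) < ((8 ^ (N + 1) : ℕ) : EReal) := by
    rw [show (0 : EReal) = ((0 : ℕ) : EReal) from by norm_cast]
    rw [EReal.natCast_lt_iff]
    positivity
  rw [EReal.bot_div_of_pos_ne_top hpos (EReal.natCast_ne_top _)]
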